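/- Let G be an edge-coloured graph on n vertices with at least n colour classes, each of size at least 2n/5. Then G contains a rainbow triangle. -/

import Mathlib

open Finset

namespace Stmt3Aux

set_option linter.unusedSectionVars false
set_option linter.unusedVariables false

variable {V : Type*} [Fintype V] [DecidableEq V]

def pairs (H : SimpleGraph V) [DecidableRel H.Adj] : Finset (V × V) :=
  Finset.univ.filter fun p => H.Adj p.1 p.2

def triples (H : SimpleGraph V) [DecidableRel H.Adj] : Finset (V × V × V) :=
  Finset.univ.filter fun t => H.Adj t.1 t.2.1 ∧ H.Adj t.2.1 t.2.2 ∧ H.Adj t.1 t.2.2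

lemma sum_pairs_fst (H : SimpleGraph V) [DecidableRel H.Adj] (f : V → ℕ) :
    ∑ p ∈ pairs H, f p.1 = ∑ v, H.degree v * f v := by
  rw [pairs, Finset.sum_filter, ← Finset.univ_product_univ, Finset.sum_product]
  refine Finset.sum_congr rfl fun v _ => ?_
  rw [← Finset.sum_filter]
  have h1 : (filter (fun a => H.Adj (v, a).1 (v, a).2) univ) = H.neighborFinset v := by
    ext a; simp [SimpleGraph.mem_neighborFinset]
  rw [h1]
  show ∑ _a ∈ H.neighborFinset v, f v = H.degree v * f v
  rw [Finset.sum_const, smul_eq_mul, SimpleGraph.card_neighborFinset_eq_degree, mul_comm]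

lemma sum_pairs_snd (H : SimpleGraph V) [DecidableRel H.Adj] (f : V → ℕ) :
    ∑ p ∈ pairs H, f p.2 = ∑ v, H.degree v * f v := by
  rw [pairs, Finset.sum_filter, ← Finset.univ_product_univ, Finset.sum_product_right]
  refine Finset.sum_congr rfl fun v _ => ?_
  rw [← Finset.sum_filter]
  have h1 : (filter (fun a => H.Adj (a, v).1 (a, v).2) univ) = H.neighborFinset v := by
    ext a; simp [SimpleGraph.mem_neighborFinset, SimpleGraph.adj_comm]
  rw [h1]
  show ∑ _a ∈ H.neighborFinset v, f v = H.degree v * f v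
  rw [Finset.sum_const, smul_eq_mul, SimpleGraph.card_neighborFinset_eq_degree, mul_comm]

lemma card_pairs (H : SimpleGraph V) [DecidableRel H.Adj] :
    (pairs H).card = 2 * H.edgeFinset.card := by
  have h := sum_pairs_fst H (fun _ => 1)
  simp only [mul_one] at h
  rw [Finset.card_eq_sum_ones, h, SimpleGraph.sum_degrees_eq_twice_card_edges]

lemma card_triples (H : SimpleGraph V) [DecidableRel H.Adj] :
    (triples H).card = ∑ p ∈ pairs H, (H.neighborFinset p.1 ∩ H.neighborFinset p.2).card := by
  rw [← Finset.card_sigma]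
  refine Finset.card_nbij' (fun t => ⟨(t.1, t.2.2), t.2.1⟩) (fun q => (q.1.1, q.2, q.1.2)) ?_ ?_ ?_ ?_
  · rintro ⟨x, y, z⟩ ht
    simp only [Finset.mem_coe, triples, mem_filter, mem_univ, true_and] at ht
    simp only [Finset.mem_coe, Finset.mem_sigma, pairs, mem_filter, mem_univ, true_and, Finset.mem_inter,
      SimpleGraph.mem_neighborFinset]
    exact ⟨ht.2.2, ht.1, ht.2.1.symm⟩
  · rintro ⟨⟨x, z⟩, y⟩ hq
    simp only [Finset.mem_coe, Finset.mem_sigma, pairs, mem_filter, mem_univ, true_and, Finset.mem_inter,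
      SimpleGraph.mem_neighborFinset] at hq
    simp only [Finset.mem_coe, triples, mem_filter, mem_univ, true_and]
    exact ⟨hq.2.1, hq.2.2.symm, hq.1⟩
  · rintro ⟨x, y, z⟩ _; rfl
  · rintro ⟨⟨x, z⟩, y⟩ _; rfl

lemma deg_add_deg_le_card (H : SimpleGraph V) [DecidableRel H.Adj] (u v : V) :
    H.degree u + H.degree v ≤ Fintype.card V + (H.neighborFinset u ∩ H.neighborFinset v).card := by
  have := Finset.card_union_add_card_inter (H.neighborFinset u) (H.neighborFinset v)
  have hle : (H.neighborFinset u ∪ H.neighborFinset v).card ≤ Fintype.card V :=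
    Finset.card_le_card (Finset.subset_univ _)
  rw [SimpleGraph.card_neighborFinset_eq_degree, SimpleGraph.card_neighborFinset_eq_degree] at this
  omega

lemma deg_add_deg_le_edges (H : SimpleGraph V) [DecidableRel H.Adj] {u v : V} (h : H.Adj u v) :
    H.degree u + H.degree v ≤ H.edgeFinset.card + 1 := by
  classical
  set A := (H.neighborFinset u).erase v with hA
  set B := (H.neighborFinset v).erase u with hB
  have hu : v ∈ H.neighborFinset u := by rwa [SimpleGraph.mem_neighborFinset]
  have hv : u ∈ H.neighborFinset v := (SimpleGraph.mem_neighborFinset _ _ _).2 h.symm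
  have hAcard : A.card + 1 = H.degree u := by
    rw [hA, Finset.card_erase_of_mem hu]
    have : 1 ≤ (H.neighborFinset u).card := Finset.card_pos.2 ⟨v, hu⟩
    rw [SimpleGraph.card_neighborFinset_eq_degree] at this ⊢
    omega
  have hBcard : B.card + 1 = H.degree v := by
    rw [hB, Finset.card_erase_of_mem hv]
    have : 1 ≤ (H.neighborFinset v).card := Finset.card_pos.2 ⟨u, hv⟩
    rw [SimpleGraph.card_neighborFinset_eq_degree] at this ⊢
    omega
  have hedge : s(u, v) ∈ H.edgeFinset := by rwa [SimpleGraph.mem_edgeFinset, SimpleGraph.mem_edgeSet]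
  have hinjA : Set.InjOn (fun w => s(u, w)) A := by
    intro a _ b _ hab
    simpa using (Sym2.congr_right).1 hab
  have hinjB : Set.InjOn (fun w => s(v, w)) B := by
    intro a _ b _ hab
    simpa using (Sym2.congr_right).1 hab
  have hsubA : A.image (fun w => s(u, w)) ⊆ H.edgeFinset.erase s(u, v) := by
    intro e he
    simp only [Finset.mem_image] at he
    obtain ⟨w, hw, rfl⟩ := he
    rw [hA, Finset.mem_erase] at hw
    refine Finset.mem_erase.2 ⟨?_, ?_⟩
    · intro hc
      exact hw.1 ((Sym2.congr_right).1 hc)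
    · rw [SimpleGraph.mem_edgeFinset, SimpleGraph.mem_edgeSet]
      rw [SimpleGraph.mem_neighborFinset] at hw
      exact hw.2
  have hsubB : B.image (fun w => s(v, w)) ⊆ H.edgeFinset.erase s(u, v) := by
    intro e he
    simp only [Finset.mem_image] at he
    obtain ⟨w, hw, rfl⟩ := he
    rw [hB, Finset.mem_erase] at hw
    refine Finset.mem_erase.2 ⟨?_, ?_⟩
    · intro hc
      rw [Sym2.eq_iff] at hc
      rcases hc with ⟨h1, h2⟩ | ⟨h1, h2⟩
      · exact H.ne_of_adj h h1.symm
      · exact hw.1 h2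
    · rw [SimpleGraph.mem_edgeFinset, SimpleGraph.mem_edgeSet]
      rw [SimpleGraph.mem_neighborFinset] at hw
      exact hw.2
  have hdisj : Disjoint (A.image (fun w => s(u, w))) (B.image (fun w => s(v, w))) := by
    rw [Finset.disjoint_left]
    intro e heA heB
    simp only [Finset.mem_image] at heA heB
    obtain ⟨a, ha, rfl⟩ := heA
    obtain ⟨b, hb, hba⟩ := heB
    rw [Sym2.eq_iff] at hba
    rw [hA, Finset.mem_erase] at ha
    rw [hB, Finset.mem_erase] at hb
    rcases hba with ⟨h1, h2⟩ | ⟨h1, h2⟩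
    · exact H.ne_of_adj h h1.symm
    · exact ha.1 h1.symm
  have hcard : A.card + B.card ≤ (H.edgeFinset.erase s(u, v)).card := by
    rw [← Finset.card_image_of_injOn hinjA, ← Finset.card_image_of_injOn hinjB,
      ← Finset.card_union_of_disjoint hdisj]
    exact Finset.card_le_card (Finset.union_subset hsubA hsubB)
  rw [Finset.card_erase_of_mem hedge] at hcard
  have : 1 ≤ H.edgeFinset.card := Finset.card_pos.2 ⟨_, hedge⟩
  omega

lemma arithC (n s k : ℕ) (hs1 : 2 * n ≤ 5 * s) (hs2 : 5 * s ≤ 2 * n + 4) (hk : s ≤ k) :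
    25 * (k * min (k + 1) n) + (35 * n + 25) * s ≤ 25 * (s * (s + 1)) + (35 * n + 25) * k := by
  rcases le_or_gt n (k + 1) with hmin | hmin
  · rw [min_eq_right hmin]
    zify
    nlinarith [sq_nonneg ((k:ℤ) - s), sq_nonneg ((k:ℤ) - n)]
  · rw [min_eq_left (le_of_lt hmin)]
    zify
    nlinarith [sq_nonneg ((k:ℤ) - s)]

lemma finalArithZ (n m s e Δ D K : ℤ) (hn : 1 ≤ n) (hs0 : 1 ≤ s) (hm : n ≤ m)
    (hs1 : 2 * n ≤ 5 * s) (hes : m * s ≤ e)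
    (hA : 2 * Δ + 12 * e ≤ 6 * K) (hB : 2 * D ≤ Δ + 2 * e * n) (hC : 4 * e ^ 2 ≤ n * D)
    (hD : 25 * K + (35 * n + 25) * (m * s) ≤ 25 * (m * (s * (s + 1))) + (35 * n + 25) * e) :
    False := by
  have hn0 : (0:ℤ) ≤ n := by linarith
  have h1 : 4 * D + 12 * e ≤ 6 * K + 4 * e * n := by linarith
  have h2 := mul_le_mul_of_nonneg_left h1 hn0
  have h3 : 400 * e ^ 2 + 300 * (e * n) ≤ 150 * (n * K) + 100 * (e * n ^ 2) := by nlinarith [hC, h2]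
  have h4 := mul_le_mul_of_nonneg_left hD (by linarith : (0:ℤ) ≤ 6 * n)
  have e1 := mul_le_mul_of_nonneg_left hs1 hn0
  have e2 := mul_le_mul_of_nonneg_left hm (by linarith : (0:ℤ) ≤ s)
  have hid : 400 * e ^ 2 + 300 * (e * n) + (210 * n ^ 2 + 150 * n) * (m * s)
      - 150 * (n * (m * (s * (s + 1)))) - (210 * n ^ 2 + 150 * n) * e - 100 * (e * n ^ 2)
      = 50 * ((m * s) * (8 * (m * s) - (3 * (n * s) + 2 * n ^ 2) + 3 * n))
        + (e - m * s) * (800 * (m * s) + 400 * (e - m * s) + (150 * n - 310 * n ^ 2)) := by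
    ring
  have pos0 : 3 * (n * s) + 2 * n ^ 2 ≤ 8 * (m * s) := by nlinarith [e1, e2]
  have pos1 : 50 * (1 * (3 * n)) ≤
      50 * ((m * s) * (8 * (m * s) - (3 * (n * s) + 2 * n ^ 2) + 3 * n)) := by
    have hms : (1:ℤ) ≤ m * s := by nlinarith
    have hinner : 3 * n ≤ 8 * (m * s) - (3 * (n * s) + 2 * n ^ 2) + 3 * n := by linarith
    have := mul_le_mul hms hinner (by linarith) (by linarith : (0:ℤ) ≤ m * s)
    linarith
  have pos2 : (0:ℤ) ≤ (e - m * s) * (800 * (m * s) + 400 * (e - m * s) + (150 * n - 310 * n ^ 2)) := by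
    apply mul_nonneg (by linarith)
    nlinarith [e1, e2]
  nlinarith [h3, h4, hid, pos1, pos2]

/-- the colour-class subgraph -/
def classGraph (G : SimpleGraph V) {ι : Type*} (col : Sym2 V → ι) (i : ι) : SimpleGraph V where
  Adj u v := G.Adj u v ∧ col s(u, v) = i
  symm := ⟨fun u v h => ⟨h.1.symm, by rw [Sym2.eq_swap]; exact h.2⟩⟩
  loopless := ⟨fun u h => G.irrefl h.1⟩

instance classGraphDec (G : SimpleGraph V) [DecidableRel G.Adj] {ι : Type*} [DecidableEq ι]
    (col : Sym2 V → ι) (i : ι) : DecidableRel (classGraph G col i).Adj :=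
  fun u v => instDecidableAnd

lemma classGraph_adj (G : SimpleGraph V) {ι : Type*} (col : Sym2 V → ι) (i : ι) (u v : V) :
    (classGraph G col i).Adj u v ↔ G.Adj u v ∧ col s(u, v) = i := Iff.rfl

end Stmt3Aux

open Stmt3Aux

/-- An edge-coloured graph on `n ≥ 1` vertices with at least `n`
colour classes, each of size at least `2n/5`, contains a rainbow triangle. -/
theorem stmt3 {V : Type*} [Fintype V] [DecidableEq V] [Nonempty V]
    (G : SimpleGraph V) [DecidableRel G.Adj] (n : ℕ) (hn : n = Fintype.card V)
    {ι : Type*} [Fintype ι] [DecidableEq ι] (col : Sym2 V → ι)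
    (hnum : n ≤ Fintype.card ι)
    (hsize : ∀ i : ι, 2 * n ≤ 5 * (G.edgeFinset.filter (fun e => col e = i)).card) :
    ∃ x y z : V, G.Adj x y ∧ G.Adj y z ∧ G.Adj x z ∧
      col s(x, y) ≠ col s(y, z) ∧ col s(y, z) ≠ col s(x, z) ∧ col s(x, y) ≠ col s(x, z) := by
  classical
  by_contra hcon
  push_neg at hcon
  -- basic data
  set m := Fintype.card ι with hm
  set s : ℕ := (2 * n + 4) / 5 with hs
  have hs1 : 2 * n ≤ 5 * s := by
    have := Nat.div_add_mod (2 * n + 4) 5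
    have h5 : (2 * n + 4) % 5 < 5 := Nat.mod_lt _ (by norm_num)
    omega
  have hs2 : 5 * s ≤ 2 * n + 4 := by
    have := Nat.div_add_mod (2 * n + 4) 5
    omega
  have hn1 : 1 ≤ n := by rw [hn]; exact Fintype.card_pos
  have hs0 : 1 ≤ s := by omega
  set Hc : ι → SimpleGraph V := fun i => classGraph G col i with hHc
  set k : ι → ℕ := fun i => (Hc i).edgeFinset.card with hk
  set a : ι → V → ℕ := fun i v => (Hc i).degree v with ha
  set d : V → ℕ := fun v => G.degree v with hd
  set e : ℕ := G.edgeFinset.card with he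
  set Dq : ℕ := ∑ v, d v * d v with hDq
  set K : ℕ := ∑ i, k i * min (k i + 1) n with hK
  set Q : ι → ℕ := fun i => ∑ v, a i v * a i v with hQ
  -- class edge sets
  have hclass : ∀ i, (Hc i).edgeFinset = G.edgeFinset.filter (fun e => col e = i) := by
    intro i
    ext ed
    induction ed using Sym2.ind with
    | _ u v =>
      simp only [SimpleGraph.mem_edgeFinset, Finset.mem_filter, SimpleGraph.mem_edgeSet, hHc,
        classGraph_adj]
  have hks : ∀ i, s ≤ k i := by
    intro i
    have h : 2 * n ≤ 5 * k i := by
      have h0 := hsize i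
      simp only [hk]
      rw [hclass i]
      exact h0
    omega
  have he_sum : ∑ i, k i = e := by
    have h := Finset.card_eq_sum_card_fiberwise
      (f := fun ed => col ed) (s := G.edgeFinset) (t := (univ : Finset ι))
      (fun x _ => Finset.mem_univ _)
    calc ∑ i, k i = ∑ i, (G.edgeFinset.filter (fun ed => col ed = i)).card := by
          refine Finset.sum_congr rfl fun i _ => ?_
          simp only [hk]
          rw [hclass i]
    _ = e := h.symm
  have hes : m * s ≤ e := by
    calc m * s = ∑ _i : ι, s := by rw [Finset.sum_const, Finset.card_univ, smul_eq_mul]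
    _ ≤ ∑ i, k i := Finset.sum_le_sum fun i _ => hks i
    _ = e := he_sum
  -- step B : lower bound on triangles
  have hB : 2 * Dq ≤ (triples G).card + 2 * e * n := by
    have h1 := card_triples G
    have h2 : ∑ p ∈ pairs G, (d p.1 + d p.2) ≤
        ∑ p ∈ pairs G, (n + (G.neighborFinset p.1 ∩ G.neighborFinset p.2).card) := by
      refine Finset.sum_le_sum fun p _ => ?_
      have h := deg_add_deg_le_card G p.1 p.2
      rw [← hn] at h
      exact h
    have h3 : ∑ p ∈ pairs G, (d p.1 + d p.2) = 2 * Dq := by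
      rw [Finset.sum_add_distrib, sum_pairs_fst, sum_pairs_snd]
      simp only [hd, hDq]
      ring
    have h4 : ∑ p ∈ pairs G, (n + (G.neighborFinset p.1 ∩ G.neighborFinset p.2).card)
        = 2 * e * n + (triples G).card := by
      rw [Finset.sum_add_distrib, Finset.sum_const, card_pairs, smul_eq_mul, ← h1, he]
    omega
  -- Cauchy-Schwarz
  have hC : 4 * e ^ 2 ≤ n * Dq := by
    have hdeg : ∑ v, d v = 2 * e := by
      simp only [hd, he]
      exact SimpleGraph.sum_degrees_eq_twice_card_edges G
    have h1 := sq_sum_le_card_mul_sum_sq (s := (univ : Finset V)) (f := fun v => ((d v : ℕ) : ℤ))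
    rw [Finset.card_univ, ← hn] at h1
    have h2 : (∑ v, ((d v : ℕ) : ℤ)) = ((2 * e : ℕ) : ℤ) := by
      rw [← Nat.cast_sum, hdeg]
    have h3 : ∑ v, ((d v : ℕ) : ℤ) ^ 2 = ((Dq : ℕ) : ℤ) := by
      rw [hDq, Nat.cast_sum]
      refine Finset.sum_congr rfl fun v _ => ?_
      push_cast
      ring
    rw [h2, h3] at h1
    have h4 : ((4 * e ^ 2 : ℕ) : ℤ) ≤ ((n * Dq : ℕ) : ℤ) := by
      push_cast at h1 ⊢
      nlinarith [h1]
    exact_mod_cast h4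
  -- upper bound via colour classes
  have hA : 2 * (triples G).card + 12 * e ≤ 6 * K := by
    set p1 : V × V × V → Prop := fun t => col s(t.1, t.2.1) = col s(t.2.1, t.2.2) with hp1
    set p2 : V × V × V → Prop := fun t => col s(t.2.1, t.2.2) = col s(t.1, t.2.2) with hp2
    set p3 : V × V × V → Prop := fun t => col s(t.1, t.2.1) = col s(t.1, t.2.2) with hp3
    -- (1) no rainbow: pointwise bound
    have key1 : (triples G).card + 2 * ((triples G).filter fun t => p1 t ∧ p2 t).card ≤
        ((triples G).filter p1).card + ((triples G).filter p2).card +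
          ((triples G).filter p3).card := by
      have hL : (triples G).card + 2 * ((triples G).filter fun t => p1 t ∧ p2 t).card
          = ∑ t ∈ triples G, (1 + 2 * (if p1 t ∧ p2 t then 1 else 0)) := by
        rw [Finset.sum_add_distrib, ← Finset.mul_sum, ← Finset.card_filter,
          ← Finset.card_eq_sum_ones]
      have hR : ((triples G).filter p1).card + ((triples G).filter p2).card +
            ((triples G).filter p3).card
          = ∑ t ∈ triples G, ((if p1 t then 1 else 0) + (if p2 t then 1 else 0)
              + (if p3 t then 1 else 0)) := by
        rw [Finset.sum_add_distrib, Finset.sum_add_distrib, Finset.card_filter,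
          Finset.card_filter, Finset.card_filter]
      rw [hL, hR]
      refine Finset.sum_le_sum fun t ht => ?_
      have hadj : G.Adj t.1 t.2.1 ∧ G.Adj t.2.1 t.2.2 ∧ G.Adj t.1 t.2.2 := by
        simpa [triples] using ht
      have h123 : p1 t ∨ p2 t ∨ p3 t := by
        by_cases h1 : p1 t
        · exact Or.inl h1
        by_cases h2 : p2 t
        · exact Or.inr (Or.inl h2)
        · exact Or.inr (Or.inr (hcon t.1 t.2.1 t.2.2 hadj.1 hadj.2.1 hadj.2.2 h1 h2))
      have htr : p1 t → p2 t → p3 t := by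
        rw [hp1, hp2, hp3]
        exact fun hu hv => hu.trans hv
      by_cases hmn : p1 t ∧ p2 t
      · rw [if_pos hmn, if_pos hmn.1, if_pos hmn.2, if_pos (htr hmn.1 hmn.2)]
      · rw [if_neg hmn]
        rcases h123 with h | h | h
        · rw [if_pos h]; omega
        · rw [if_pos h]; omega
        · rw [if_pos h]; omega
    -- (2) the three filters have equal cardinality
    have hswap2 : ((triples G).filter p2).card = ((triples G).filter p1).card := by
      refine Finset.card_nbij' (fun t => (t.1, t.2.2, t.2.1)) (fun t => (t.1, t.2.2, t.2.1))
        ?_ ?_ ?_ ?_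
      · rintro ⟨x, y, z⟩ ht
        simp only [Finset.mem_coe, triples, Finset.mem_filter, mem_univ, true_and, hp1, hp2] at ht ⊢
        obtain ⟨⟨a1, a2, a3⟩, hp⟩ := ht
        refine ⟨⟨a3, a2.symm, a1⟩, ?_⟩
        have e1 : s(z, y) = s(y, z) := Sym2.eq_swap
        rw [e1]
        exact hp.symm
      · rintro ⟨x, y, z⟩ ht
        simp only [Finset.mem_coe, triples, Finset.mem_filter, mem_univ, true_and, hp1, hp2] at ht ⊢
        obtain ⟨⟨a1, a2, a3⟩, hp⟩ := ht
        refine ⟨⟨a3, a2.symm, a1⟩, ?_⟩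
        have e1 : s(z, y) = s(y, z) := Sym2.eq_swap
        rw [e1]
        exact hp.symm
      · rintro ⟨x, y, z⟩ _; rfl
      · rintro ⟨x, y, z⟩ _; rfl
    have hswap3 : ((triples G).filter p3).card = ((triples G).filter p1).card := by
      refine Finset.card_nbij' (fun t => (t.2.1, t.1, t.2.2)) (fun t => (t.2.1, t.1, t.2.2))
        ?_ ?_ ?_ ?_
      · rintro ⟨x, y, z⟩ ht
        simp only [Finset.mem_coe, triples, Finset.mem_filter, mem_univ, true_and, hp1, hp3] at ht ⊢
        obtain ⟨⟨a1, a2, a3⟩, hp⟩ := ht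
        refine ⟨⟨a1.symm, a3, a2⟩, ?_⟩
        have e1 : s(y, x) = s(x, y) := Sym2.eq_swap
        rw [e1]
        exact hp
      · rintro ⟨x, y, z⟩ ht
        simp only [Finset.mem_coe, triples, Finset.mem_filter, mem_univ, true_and, hp1, hp3] at ht ⊢
        obtain ⟨⟨a1, a2, a3⟩, hp⟩ := ht
        refine ⟨⟨a1.symm, a3, a2⟩, ?_⟩
        have e1 : s(y, x) = s(x, y) := Sym2.eq_swap
        rw [e1]
        exact hp
      · rintro ⟨x, y, z⟩ _; rfl
      · rintro ⟨x, y, z⟩ _; rfl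
    -- (3) monochromatic triples split over colour classes
    have hmono : ((triples G).filter fun t => p1 t ∧ p2 t).card
        = ∑ i, (triples (Hc i)).card := by
      rw [Finset.card_eq_sum_card_fiberwise
        (f := fun t => col s(t.1, t.2.1)) (t := (univ : Finset ι)) (fun x _ => mem_univ _)]
      refine Finset.sum_congr rfl fun i _ => ?_
      congr 1
      ext ⟨x, y, z⟩
      simp only [Finset.mem_filter, triples, mem_univ, true_and, hp1, hp2, hHc, classGraph_adj]
      constructor
      · rintro ⟨⟨⟨a1, a2, a3⟩, hq1, hq2⟩, hcol⟩
        refine ⟨⟨a1, hcol⟩, ⟨a2, by rw [← hq1]; exact hcol⟩, ⟨a3, by rw [← hq2, ← hq1]; exact hcol⟩⟩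
      · rintro ⟨⟨a1, c1⟩, ⟨a2, c2⟩, ⟨a3, c3⟩⟩
        exact ⟨⟨⟨a1, a2, a3⟩, c1.trans c2.symm, c2.trans c3.symm⟩, c1⟩
    -- (4) bounding same-colour cherries per class
    have hF1i : ∀ i : ι,
        (((triples G).filter p1).filter fun t => col s(t.1, t.2.1) = i).card + 2 * k i ≤ Q i := by
      intro i
      have hhand : ∑ v, a i v = 2 * k i := by
        simp only [ha, hk]
        exact SimpleGraph.sum_degrees_eq_twice_card_edges (Hc i)
      have hcard_le : ((((triples G).filter p1).filter fun t => col s(t.1, t.2.1) = i)).card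
          ≤ (univ.sigma fun y : V => ((Hc i).neighborFinset y).offDiag).card := by
        refine Finset.card_le_card_of_injOn (fun t => ⟨t.2.1, (t.1, t.2.2)⟩) ?_ ?_
        · rintro ⟨x, y, z⟩ ht
          simp only [Finset.mem_coe, Finset.mem_filter, triples, mem_univ, true_and, hp1] at ht
          obtain ⟨⟨⟨a1, a2, a3⟩, hq1⟩, hcol⟩ := ht
          simp only [Finset.mem_coe, Finset.mem_sigma, mem_univ, true_and, Finset.mem_offDiag,
            SimpleGraph.mem_neighborFinset, hHc, classGraph_adj]
          refine ⟨⟨a1.symm, ?_⟩, ⟨a2, ?_⟩, G.ne_of_adj a3⟩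
          · have e1 : s(y, x) = s(x, y) := Sym2.eq_swap
            rw [e1]
            exact hcol
          · rw [← hq1]
            exact hcol
        · rintro ⟨x, y, z⟩ _ ⟨x', y', z'⟩ _ hxy
          simp only [Sigma.mk.inj_iff, Prod.mk.injEq, heq_eq_eq] at hxy
          obtain ⟨h1, h2, h3⟩ := hxy
          simp [Prod.ext_iff, h1, h2, h3]
      have hsig : (univ.sigma fun y : V => ((Hc i).neighborFinset y).offDiag).card
          = ∑ v, (a i v * a i v - a i v) := by
        rw [Finset.card_sigma]
        refine Finset.sum_congr rfl fun v _ => ?_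
        rw [Finset.offDiag_card]
        simp only [ha, SimpleGraph.card_neighborFinset_eq_degree]
      have haa : ∑ v, (a i v * a i v - a i v) + ∑ v, a i v = Q i := by
        rw [← Finset.sum_add_distrib, hQ]
        refine Finset.sum_congr rfl fun v _ => ?_
        rcases Nat.eq_zero_or_pos (a i v) with h0 | h0
        · simp [h0]
        · have h1 : a i v ≤ a i v * a i v := Nat.le_mul_of_pos_left _ h0
          omega
      omega
    -- (5) cherry bound per class via edge count / vertex count
    have hQi : ∀ i : ι, 2 * Q i ≤ 2 * (k i * min (k i + 1) n) + (triples (Hc i)).card := by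
      intro i
      have h2q : ∑ p ∈ pairs (Hc i), (a i p.1 + a i p.2) = 2 * Q i := by
        rw [Finset.sum_add_distrib, sum_pairs_fst (Hc i) (a i), sum_pairs_snd (Hc i) (a i)]
        simp only [hQ, ha]
        ring
      have hpt : ∀ p ∈ pairs (Hc i), a i p.1 + a i p.2 ≤
          min (k i + 1) n +
            ((Hc i).neighborFinset p.1 ∩ (Hc i).neighborFinset p.2).card := by
        intro p hp
        have hadj : (Hc i).Adj p.1 p.2 := by simpa [pairs] using hp
        have hdd : a i p.1 + a i p.2 = (Hc i).degree p.1 + (Hc i).degree p.2 := by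
          simp only [ha]
        rw [hdd]
        rcases le_total (k i + 1) n with hmn | hmn
        · rw [min_eq_left hmn]
          have h := deg_add_deg_le_edges (Hc i) hadj
          have hki : k i = (Hc i).edgeFinset.card := by simp only [hk]
          omega
        · rw [min_eq_right hmn]
          have h := deg_add_deg_le_card (Hc i) p.1 p.2
          rw [← hn] at h
          omega
      have hsum := Finset.sum_le_sum hpt
      have hRHS : ∑ p ∈ pairs (Hc i), (min (k i + 1) n +
            ((Hc i).neighborFinset p.1 ∩ (Hc i).neighborFinset p.2).card)
          = 2 * k i * min (k i + 1) n + (triples (Hc i)).card := by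
        rw [Finset.sum_add_distrib, Finset.sum_const, card_pairs, smul_eq_mul, ← card_triples]
      rw [h2q, hRHS] at hsum
      calc 2 * Q i ≤ 2 * k i * min (k i + 1) n + (triples (Hc i)).card := hsum
      _ = 2 * (k i * min (k i + 1) n) + (triples (Hc i)).card := by ring
    -- (6) assemble
    have hsumF1 : ((triples G).filter p1).card
        = ∑ i, (((triples G).filter p1).filter fun t => col s(t.1, t.2.1) = i).card :=
      Finset.card_eq_sum_card_fiberwise (fun x _ => mem_univ _)
    have hstep4 : ((triples G).filter p1).card + 2 * e ≤ ∑ i, Q i := by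
      rw [hsumF1, ← he_sum, Finset.mul_sum, ← Finset.sum_add_distrib]
      exact Finset.sum_le_sum fun i _ => hF1i i
    have hstep5 : 2 * (∑ i, Q i) ≤ 2 * K + ((triples G).filter fun t => p1 t ∧ p2 t).card := by
      rw [hmono, hK, Finset.mul_sum, Finset.mul_sum, ← Finset.sum_add_distrib]
      exact Finset.sum_le_sum fun i _ => hQi i
    omega
  -- arithmetic bound on K
  have hD : 25 * K + (35 * n + 25) * (m * s) ≤ 25 * (m * (s * (s + 1))) + (35 * n + 25) * e := by
    have h := Finset.sum_le_sum (fun i (_ : i ∈ (univ : Finset ι)) => arithC n s (k i) hs1 hs2 (hks i))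
    have h1 : ∑ i, 25 * (k i * min (k i + 1) n) = 25 * K := by rw [hK, Finset.mul_sum]
    have h2 : ∑ _i : ι, (35 * n + 25) * s = (35 * n + 25) * (m * s) := by
      rw [Finset.sum_const, Finset.card_univ, smul_eq_mul, hm]
      ring
    have h3 : ∑ _i : ι, 25 * (s * (s + 1)) = 25 * (m * (s * (s + 1))) := by
      rw [Finset.sum_const, Finset.card_univ, smul_eq_mul, hm]
      ring
    have h4 : ∑ i, (35 * n + 25) * k i = (35 * n + 25) * e := by
      rw [← Finset.mul_sum, he_sum]
    rw [Finset.sum_add_distrib, Finset.sum_add_distrib, h1, h2, h3, h4] at h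
    exact h
  exact finalArithZ n m s e (triples G).card Dq K (by exact_mod_cast hn1) (by exact_mod_cast hs0)
    (by exact_mod_cast hnum) (by exact_mod_cast hs1) (by exact_mod_cast hes)
    (by exact_mod_cast hA) (by exact_mod_cast hB) (by exact_mod_cast hC) (by exact_mod_cast hD)
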